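/- Let A (|U|×|X|) and B (|Y|×|U|) be column-stochastic matrices, A with no zero rows. Suppose the right null space of B is nontrivial and (A,B) is non-manipulable. Let 𝒜 be the set of vectors vec(ΥA) where Υ ranges over |U|×|U| matrices with each column j balanced and (0,0)-polarized at j and Frobenius norm ‖Υ‖_F ≤ 2|U|. Then there exists κ > 0, depending only on A and B, such that for every |U|×|U| matrix Ψ whose columns lie in the right null space of B and with ‖Ψ‖₁ = 1 (sum of absolute values of all entries equals 1), there is an L1-normalized vector υ with υ·vec(Ψ) ≥ κ and υ·ω ≤ 0 for all ω ∈ 𝒜. -/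

import Mathlib

open Finset

/-- The observation channel `(A, B)` is manipulable. -/
def Manipulable {U X Y : ℕ} (A : Matrix (Fin U) (Fin X) ℝ)
    (B : Matrix (Fin Y) (Fin U) ℝ) : Prop :=
  ∃ Υ : Matrix (Fin U) (Fin U) ℝ, Υ ≠ 0 ∧
    (∀ j, ∑ i, Υ i j = 0) ∧ (∀ j, 0 ≤ Υ j j) ∧
    (∀ i j, i ≠ j → Υ i j ≤ 0) ∧ B * Υ * A = 0

open scoped RealInnerProductSpace

namespace Stmt12Aux

variable {U X Y : ℕ}

/-- `vec Υ ↦ vec (Υ * A)` as a linear map between Euclidean spaces. -/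
noncomputable def T (A : Matrix (Fin U) (Fin X) ℝ) :
    EuclideanSpace ℝ (Fin U × Fin U) →ₗ[ℝ] EuclideanSpace ℝ (Fin U × Fin X) where
  toFun v := WithLp.toLp 2 (fun p : Fin U × Fin X => ∑ k, v (p.1, k) * A k p.2)
  map_add' v w := by
    ext p
    simp [PiLp.add_apply, add_mul, Finset.sum_add_distrib]
  map_smul' c v := by
    ext p
    simp [PiLp.smul_apply, Finset.mul_sum, mul_assoc]

lemma T_apply (A : Matrix (Fin U) (Fin X) ℝ)
    (v : EuclideanSpace ℝ (Fin U × Fin U)) (p : Fin U × Fin X) :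
    T A v p = ∑ k, v (p.1, k) * A k p.2 := rfl

/-- The cone of "polarized balanced" matrices, vectorized. -/
def K' (U : ℕ) : Set (EuclideanSpace ℝ (Fin U × Fin U)) :=
  {v | (∀ j, ∑ i, v (i, j) = 0) ∧ (∀ j, 0 ≤ v (j, j)) ∧
    ∀ i j, i ≠ j → v (i, j) ≤ 0}

lemma zero_mem_K' : (0 : EuclideanSpace ℝ (Fin U × Fin U)) ∈ K' U := by
  refine ⟨fun j => by simp, fun j => by simp, fun i j _ => by simp⟩

lemma K'_smul {c : ℝ} (hc : 0 ≤ c) {v : EuclideanSpace ℝ (Fin U × Fin U)}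
    (hv : v ∈ K' U) : c • v ∈ K' U := by
  obtain ⟨h1, h2, h3⟩ := hv
  refine ⟨fun j => ?_, fun j => ?_, fun i j hij => ?_⟩
  · simp only [PiLp.smul_apply, smul_eq_mul, ← Finset.mul_sum, h1 j, mul_zero]
  · simpa using mul_nonneg hc (h2 j)
  · simpa using mul_nonpos_of_nonneg_of_nonpos hc (h3 i j hij)

lemma K'_convex : Convex ℝ (K' U) := by
  intro v hv w hw a b ha hb hab
  obtain ⟨hv1, hv2, hv3⟩ := hv
  obtain ⟨hw1, hw2, hw3⟩ := hw
  refine ⟨fun j => ?_, fun j => ?_, fun i j hij => ?_⟩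
  · simp only [PiLp.add_apply, PiLp.smul_apply, smul_eq_mul]
    rw [Finset.sum_add_distrib, ← Finset.mul_sum, ← Finset.mul_sum, hv1 j, hw1 j]
    ring
  · simp only [PiLp.add_apply, PiLp.smul_apply, smul_eq_mul]
    exact add_nonneg (mul_nonneg ha (hv2 j)) (mul_nonneg hb (hw2 j))
  · simp only [PiLp.add_apply, PiLp.smul_apply, smul_eq_mul]
    exact add_nonpos (mul_nonpos_of_nonneg_of_nonpos ha (hv3 i j hij))
      (mul_nonpos_of_nonneg_of_nonpos hb (hw3 i j hij))

lemma continuous_eval {ι : Type*} [Fintype ι] (p : ι) :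
    Continuous fun v : EuclideanSpace ℝ ι => v p :=
  (EuclideanSpace.proj p).continuous

lemma K'_closed : IsClosed (K' U) := by
  have h1 : IsClosed {v : EuclideanSpace ℝ (Fin U × Fin U) | ∀ j, ∑ i, v (i, j) = 0} := by
    rw [Set.setOf_forall]
    exact isClosed_iInter fun j => isClosed_eq
      (by exact continuous_finset_sum _ fun i _ => continuous_eval _) continuous_const
  have h2 : IsClosed {v : EuclideanSpace ℝ (Fin U × Fin U) | ∀ j, 0 ≤ v (j, j)} := by
    rw [Set.setOf_forall]
    exact isClosed_iInter fun j => isClosed_le continuous_const (continuous_eval _)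
  have h3 : IsClosed {v : EuclideanSpace ℝ (Fin U × Fin U) |
      ∀ i j, i ≠ j → v (i, j) ≤ 0} := by
    rw [Set.setOf_forall]
    refine isClosed_iInter fun i => ?_
    rw [Set.setOf_forall]
    refine isClosed_iInter fun j => ?_
    by_cases hij : i = j
    · simp [hij]
    · have : {v : EuclideanSpace ℝ (Fin U × Fin U) | i ≠ j → v (i, j) ≤ 0}
          = {v | v (i, j) ≤ 0} := by
        ext v; simp [hij]
      rw [this]
      exact isClosed_le (continuous_eval _) continuous_const
  have : K' U = _ ∩ (_ ∩ _) := rfl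
  exact (h1.inter (h2.inter h3))

lemma real_inner_eq {ι : Type*} [Fintype ι] (x y : EuclideanSpace ℝ ι) :
    ⟪x, y⟫ = ∑ p, x p * y p := by
  simp [PiLp.inner_apply, RCLike.inner_apply, mul_comm]

lemma norm_sq_eq {ι : Type*} [Fintype ι] (x : EuclideanSpace ℝ ι) :
    ‖x‖ ^ 2 = ∑ p, x p ^ 2 := by
  rw [EuclideanSpace.norm_eq, Real.sq_sqrt (by positivity)]
  simp [Real.norm_eq_abs, sq_abs]

end Stmt12Aux

set_option maxHeartbeats 1000000 in
open Stmt12Aux in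
theorem stmt_12 {U X Y : ℕ} [NeZero U] [NeZero X] [NeZero Y]
    (A : Matrix (Fin U) (Fin X) ℝ) (B : Matrix (Fin Y) (Fin U) ℝ)
    (hA0 : ∀ i j, 0 ≤ A i j) (hAcol : ∀ j, ∑ i, A i j = 1)
    (hArow : ∀ i, ∃ j, A i j ≠ 0)
    (hB0 : ∀ i j, 0 ≤ B i j) (hBcol : ∀ j, ∑ i, B i j = 1)
    -- the right null space of `B` is nontrivial
    (hBnontriv : ∃ ω : Fin U → ℝ, ω ≠ 0 ∧ ∀ i, ∑ j, B i j * ω j = 0)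
    (hnm : ¬ Manipulable A B) :
    ∃ κ : ℝ, 0 < κ ∧
      ∀ Ψ : Matrix (Fin U) (Fin X) ℝ,
        -- every column of `Ψ` lies in the right null space of `B`
        (∀ (l : Fin X) (i : Fin Y), ∑ j, B i j * Ψ j l = 0) →
        (∑ i, ∑ j, |Ψ i j| = 1) →
        ∃ υ : Matrix (Fin U) (Fin X) ℝ,
          (∑ i, ∑ j, |υ i j| = 1) ∧
          κ ≤ ∑ i, ∑ j, υ i j * Ψ i j ∧
          -- `υ · ω ≤ 0` for every `ω = vec(Υ A)` in the set `𝒜`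
          ∀ Υ : Matrix (Fin U) (Fin U) ℝ,
            (∀ j, ∑ i, Υ i j = 0) → (∀ j, 0 ≤ Υ j j) →
            (∀ i j, i ≠ j → Υ i j ≤ 0) →
            (∑ i, ∑ j, Υ i j ^ 2) ≤ (2 * (U : ℝ)) ^ 2 →
            ∑ i, ∑ j, υ i j * (Υ * A) i j ≤ 0 := by
  classical
  -- Injectivity of `T A` on the cone `K'`.
  have hKinj : ∀ v ∈ K' U, T A v = 0 → v = 0 := by
    intro v hv hTv
    by_contra hv0
    apply hnm
    refine ⟨Matrix.of fun i j => v (i, j), ?_, hv.1, hv.2.1, hv.2.2, ?_⟩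
    · intro h0
      apply hv0
      ext p
      simpa using congrFun (congrFun h0 p.1) p.2
    · have hUA : (Matrix.of fun i j => v (i, j)) * A = 0 := by
        ext j l
        have := congrArg (fun x : EuclideanSpace ℝ (Fin U × Fin X) => x (j, l)) hTv
        simpa [Matrix.mul_apply, T_apply] using this
      rw [Matrix.mul_assoc, hUA, Matrix.mul_zero]
  -- Quantitative injectivity on the cone.
  obtain ⟨c, hc0, hc⟩ : ∃ c > 0, ∀ v ∈ K' U, c * ‖v‖ ≤ ‖T A v‖ := by
    by_cases hne : (Metric.sphere (0 : EuclideanSpace ℝ (Fin U × Fin U)) 1 ∩ K' U).Nonempty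
    · have hcomp : IsCompact (Metric.sphere (0 : EuclideanSpace ℝ (Fin U × Fin U)) 1 ∩ K' U) :=
        (isCompact_sphere 0 1).inter_right K'_closed
      have hcontT : Continuous (T A) := LinearMap.continuous_of_finiteDimensional _
      obtain ⟨v₀, hv₀, hmin⟩ := hcomp.exists_isMinOn hne
        ((continuous_norm.comp hcontT).continuousOn)
      have hv₀n : ‖v₀‖ = 1 := by simpa using mem_sphere_zero_iff_norm.1 hv₀.1
      refine ⟨‖T A v₀‖, ?_, ?_⟩
      · rcases (norm_nonneg (T A v₀)).lt_or_eq with h | h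
        · exact h
        · exfalso
          have hT0 : T A v₀ = 0 := norm_eq_zero.1 h.symm
          have := hKinj v₀ hv₀.2 hT0
          rw [this] at hv₀n
          simp at hv₀n
      · intro v hv
        rcases eq_or_ne v 0 with rfl | hvne
        · simp
        · have hnv : (0 : ℝ) < ‖v‖ := norm_pos_iff.2 hvne
          have hmem : ‖v‖⁻¹ • v ∈
              Metric.sphere (0 : EuclideanSpace ℝ (Fin U × Fin U)) 1 ∩ K' U := by
            constructor
            · rw [mem_sphere_zero_iff_norm, norm_smul]
              simp [abs_of_pos (inv_pos.2 hnv), inv_mul_cancel₀ hnv.ne']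
            · exact K'_smul (inv_nonneg.2 hnv.le) hv
          have := hmin hmem
          simp only [Set.mem_setOf_eq, Function.comp_apply] at this
          have h2 : ‖T A v₀‖ ≤ ‖T A (‖v‖⁻¹ • v)‖ := this
          rw [map_smul, norm_smul] at h2
          have : ‖T A v₀‖ ≤ ‖v‖⁻¹ * ‖T A v‖ := by
            simpa [abs_of_pos (inv_pos.2 hnv)] using h2
          calc ‖T A v₀‖ * ‖v‖ ≤ (‖v‖⁻¹ * ‖T A v‖) * ‖v‖ := by
                exact mul_le_mul_of_nonneg_right this hnv.le
            _ = ‖T A v‖ := by field_simp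
    · refine ⟨1, one_pos, fun v hv => ?_⟩
      have hv0 : v = 0 := by
        by_contra h
        have hnv : (0 : ℝ) < ‖v‖ := norm_pos_iff.2 h
        exact hne ⟨‖v‖⁻¹ • v, by
          rw [mem_sphere_zero_iff_norm, norm_smul]
          simp [abs_of_pos (inv_pos.2 hnv), inv_mul_cancel₀ hnv.ne'],
          K'_smul (inv_nonneg.2 hnv.le) hv⟩
      simp [hv0]
  -- The truncated cone and its image.
  set R : ℝ := max (2 * U) (4 / c) with hR
  have hR0 : 0 ≤ R := le_trans (by positivity) (le_max_right _ _)
  set Kb : Set (EuclideanSpace ℝ (Fin U × Fin U)) := K' U ∩ Metric.closedBall 0 R with hKb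
  have hKbcomp : IsCompact Kb := (isCompact_closedBall 0 R).inter_left K'_closed
  have hcontT : Continuous (T A) := LinearMap.continuous_of_finiteDimensional _
  set Cb : Set (EuclideanSpace ℝ (Fin U × Fin X)) := T A '' Kb with hCb
  have hCbcomp : IsCompact Cb := hKbcomp.image hcontT
  have hCbconv : Convex ℝ Cb :=
    (K'_convex.inter (convex_closedBall 0 R)).linear_image (T A)
  have h0Cb : (0 : EuclideanSpace ℝ (Fin U × Fin X)) ∈ Cb :=
    ⟨0, ⟨zero_mem_K', by simp [hR0]⟩, by simp⟩
  -- The compact set of vectorized null-space matrices with L1 norm one.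
  set S : Set (EuclideanSpace ℝ (Fin U × Fin X)) :=
    {w | (∀ (l : Fin X) (i : Fin Y), ∑ j, B i j * w (j, l) = 0) ∧ ∑ p, |w p| = 1} with hS
  have hSC : ∀ w ∈ S, w ∉ Cb := by
    rintro w ⟨hw1, hw2⟩ ⟨v, ⟨hvK, _⟩, rfl⟩
    apply hnm
    refine ⟨Matrix.of fun i j => v (i, j), ?_, hvK.1, hvK.2.1, hvK.2.2, ?_⟩
    · intro h0
      have hv0 : v = 0 := by
        ext p
        simpa using congrFun (congrFun h0 p.1) p.2
      rw [hv0] at hw2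
      simp at hw2
    · rw [Matrix.mul_assoc]
      ext i l
      simp only [Matrix.mul_apply, Matrix.of_apply, Matrix.zero_apply]
      simpa [T_apply] using hw1 l i
  have hScomp : IsCompact S := by
    have hclosed : IsClosed S := by
      have h1 : IsClosed {w : EuclideanSpace ℝ (Fin U × Fin X) |
          ∀ (l : Fin X) (i : Fin Y), ∑ j, B i j * w (j, l) = 0} := by
        rw [Set.setOf_forall]
        refine isClosed_iInter fun l => ?_
        rw [Set.setOf_forall]
        refine isClosed_iInter fun i => ?_
        exact isClosed_eq (continuous_finset_sum _ fun j _ =>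
          (continuous_const.mul (continuous_eval ((j, l) : Fin U × Fin X)))) continuous_const
      have h2 : IsClosed {w : EuclideanSpace ℝ (Fin U × Fin X) | ∑ p, |w p| = 1} :=
        isClosed_eq (continuous_finset_sum _ fun p _ =>
          (continuous_eval p).abs) continuous_const
      exact h1.inter h2
    have hsub : S ⊆ Metric.closedBall 0 1 := by
      rintro w ⟨_, hw2⟩
      rw [Metric.mem_closedBall, dist_zero_right]
      have h1 : ‖w‖ ^ 2 ≤ 1 := by
        rw [norm_sq_eq]
        calc ∑ p, w p ^ 2 = ∑ p, |w p| ^ 2 := by simp [sq_abs]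
          _ ≤ (∑ p, |w p|) ^ 2 := sum_sq_le_sq_sum_of_nonneg fun p _ => abs_nonneg _
          _ = 1 := by rw [hw2]; norm_num
      nlinarith [norm_nonneg w]
    exact (isCompact_closedBall 0 1).of_isClosed_subset hclosed hsub
  -- The uniform separation distance.
  by_cases hSne : S.Nonempty
  case neg =>
    refine ⟨1, one_pos, fun Ψ hΨB hΨ1 => ?_⟩
    exfalso
    apply hSne
    refine ⟨WithLp.toLp 2 (fun p : Fin U × Fin X => Ψ p.1 p.2), fun l i => hΨB l i, ?_⟩
    rw [Fintype.sum_prod_type]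
    exact hΨ1
  case pos =>
  obtain ⟨w₀, hw₀S, hw₀min⟩ := hScomp.exists_isMinOn hSne
    (Metric.continuous_infDist_pt Cb).continuousOn
  set δ : ℝ := Metric.infDist w₀ Cb with hδdef
  have hδ : 0 < δ :=
    (hCbcomp.isClosed.notMem_iff_infDist_pos ⟨0, h0Cb⟩).1 (hSC w₀ hw₀S)
  have hUX : (0 : ℝ) < Real.sqrt (U * X) := by
    apply Real.sqrt_pos.2
    have hU := Nat.pos_of_ne_zero (NeZero.ne U)
    have hX := Nat.pos_of_ne_zero (NeZero.ne X)
    positivity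
  refine ⟨δ / Real.sqrt (U * X), div_pos hδ hUX, fun Ψ hΨB hΨ1 => ?_⟩
  set w : EuclideanSpace ℝ (Fin U × Fin X) := WithLp.toLp 2 (fun p : Fin U × Fin X => Ψ p.1 p.2) with hwdef
  have hwS : w ∈ S := ⟨fun l i => hΨB l i, by rw [Fintype.sum_prod_type]; exact hΨ1⟩
  have hwnorm : ‖w‖ ≤ 1 := by
    have h1 : ‖w‖ ^ 2 ≤ 1 := by
      rw [norm_sq_eq]
      calc ∑ p, w p ^ 2 = ∑ p, |w p| ^ 2 := by simp [sq_abs]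
        _ ≤ (∑ p, |w p|) ^ 2 := sum_sq_le_sq_sum_of_nonneg fun p _ => abs_nonneg _
        _ = 1 := by rw [hwS.2]; norm_num
    nlinarith [norm_nonneg w]
  have hδw : δ ≤ Metric.infDist w Cb := hw₀min hwS
  -- Projection of `w` onto `Cb`.
  obtain ⟨q, hqCb, hqmin⟩ := exists_norm_eq_iInf_of_complete_convex ⟨0, h0Cb⟩
    hCbcomp.isClosed.isComplete hCbconv w
  have hineq : ∀ ω ∈ Cb, ⟪w - q, ω - q⟫ ≤ 0 :=
    (norm_eq_iInf_iff_real_inner_le_zero hCbconv hqCb).1 hqmin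
  set υ₀ : EuclideanSpace ℝ (Fin U × Fin X) := w - q with hυ₀def
  have hυ₀δ : δ ≤ ‖υ₀‖ := by
    calc δ ≤ Metric.infDist w Cb := hδw
      _ ≤ dist w q := Metric.infDist_le_dist_of_mem hqCb
      _ = ‖υ₀‖ := by rw [dist_eq_norm]
  have hυ₀le1 : ‖υ₀‖ ≤ 1 := by
    have hbdd : BddBelow (Set.range fun ω : Cb => ‖w - (ω : EuclideanSpace ℝ (Fin U × Fin X))‖) :=
      ⟨0, by rintro x ⟨ω, rfl⟩; exact norm_nonneg _⟩
    calc ‖υ₀‖ = ⨅ ω : Cb, ‖w - (ω : EuclideanSpace ℝ (Fin U × Fin X))‖ := hqmin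
      _ ≤ ‖w - (0 : EuclideanSpace ℝ (Fin U × Fin X))‖ := ciInf_le hbdd ⟨0, h0Cb⟩
      _ = ‖w‖ := by rw [sub_zero]
      _ ≤ 1 := hwnorm
  have hqnorm : ‖q‖ ≤ 2 := by
    have : q = w - υ₀ := by rw [hυ₀def]; abel
    rw [this]
    calc ‖w - υ₀‖ ≤ ‖w‖ + ‖υ₀‖ := norm_sub_le _ _
      _ ≤ 1 + 1 := add_le_add hwnorm hυ₀le1
      _ = 2 := by norm_num
  -- `2 • q ∈ Cb`.
  have h2q : (2 : ℝ) • q ∈ Cb := by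
    obtain ⟨v, ⟨hvK, hvball⟩, rfl⟩ := hqCb
    refine ⟨(2 : ℝ) • v, ⟨K'_smul (by norm_num) hvK, ?_⟩, by rw [map_smul]⟩
    rw [Metric.mem_closedBall, dist_zero_right, norm_smul]
    have hvnorm : ‖v‖ ≤ 2 / c := by
      have h1 := hc v hvK
      have h2 : ‖T A v‖ ≤ 2 := hqnorm
      rw [le_div_iff₀ hc0]
      nlinarith
    calc |(2 : ℝ)| * ‖v‖ ≤ 2 * (2 / c) := by
          rw [abs_of_pos (by norm_num : (0:ℝ) < 2)]
          exact mul_le_mul_of_nonneg_left hvnorm (by norm_num)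
      _ = 4 / c := by ring
      _ ≤ R := le_max_right _ _
  have hperp : ⟪υ₀, q⟫ = 0 := by
    have h1 := hineq 0 h0Cb
    have h2 := hineq ((2 : ℝ) • q) h2q
    rw [zero_sub, inner_neg_right] at h1
    have h3 : (2 : ℝ) • q - q = q := by
      rw [two_smul]; abel
    rw [h3] at h2
    linarith
  have hCle : ∀ ω ∈ Cb, ⟪υ₀, ω⟫ ≤ 0 := by
    intro ω hω
    have := hineq ω hω
    rw [inner_sub_right, hperp, sub_zero] at this
    exact this
  have hinnerw : ⟪υ₀, w⟫ = ‖υ₀‖ ^ 2 := by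
    have : w = υ₀ + q := by rw [hυ₀def]; abel
    rw [this, inner_add_right, hperp, add_zero, real_inner_self_eq_norm_sq]
  -- L1 norm of `υ₀`.
  set L : ℝ := ∑ p, |υ₀ p| with hLdef
  have hL0 : 0 < L := by
    rcases (Finset.sum_nonneg fun p _ => abs_nonneg (υ₀ p)).lt_or_eq with h | h
    · exact h
    · exfalso
      have hall : ∀ p ∈ Finset.univ, |υ₀ p| = 0 :=
        (Finset.sum_eq_zero_iff_of_nonneg fun p _ => abs_nonneg _).1 h.symm
      have : υ₀ = 0 := by
        ext p
        simpa using abs_eq_zero.1 (hall p (Finset.mem_univ p))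
      rw [this] at hυ₀δ
      simp at hυ₀δ
      linarith
  have hLle : L ≤ Real.sqrt (U * X) * ‖υ₀‖ := by
    have key : (∑ p : Fin U × Fin X, |υ₀ p|) ^ 2
        ≤ (((Finset.univ : Finset (Fin U × Fin X)).card : ℝ)) * ∑ p, |υ₀ p| ^ 2 := by
      exact_mod_cast sq_sum_le_card_mul_sum_sq
        (s := (Finset.univ : Finset (Fin U × Fin X))) (f := fun p => |υ₀ p|)
    have hcard : (((Finset.univ : Finset (Fin U × Fin X)).card : ℝ)) = (U : ℝ) * X := by
      simp [Finset.card_univ]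
    have habs : ∑ p : Fin U × Fin X, |υ₀ p| ^ 2 = ∑ p, υ₀ p ^ 2 :=
      Finset.sum_congr rfl fun p _ => sq_abs _
    have h1 : L ^ 2 ≤ ((U : ℝ) * X) * ‖υ₀‖ ^ 2 := by
      rw [norm_sq_eq, hLdef]
      calc (∑ p : Fin U × Fin X, |υ₀ p|) ^ 2
          ≤ (((Finset.univ : Finset (Fin U × Fin X)).card : ℝ)) * ∑ p, |υ₀ p| ^ 2 := key
        _ = ((U : ℝ) * X) * ∑ p, υ₀ p ^ 2 := by rw [hcard, habs]
    have h2 := Real.sqrt_le_sqrt h1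
    rwa [Real.sqrt_sq hL0.le, Real.sqrt_mul (by positivity), Real.sqrt_sq (norm_nonneg _)] at h2
  -- Define the separating matrix.
  refine ⟨Matrix.of fun i l => υ₀ (i, l) / L, ?_, ?_, ?_⟩
  · show ∑ i, ∑ j, |υ₀ (i, j) / L| = 1
    have hps : (∑ p : Fin U × Fin X, |υ₀ p / L|) = ∑ i, ∑ j, |υ₀ (i, j) / L| :=
      Fintype.sum_prod_type _
    rw [← hps]
    calc ∑ p : Fin U × Fin X, |υ₀ p / L| = ∑ p, |υ₀ p| / L := by
          refine Finset.sum_congr rfl fun p _ => ?_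
          rw [abs_div, abs_of_pos hL0]
      _ = L / L := by rw [← Finset.sum_div]
      _ = 1 := div_self hL0.ne'
  · have heq : ∑ i, ∑ j, (υ₀ (i, j) / L) * Ψ i j = ⟪υ₀, w⟫ / L := by
      rw [real_inner_eq, Fintype.sum_prod_type, Finset.sum_div]
      refine Finset.sum_congr rfl fun i _ => ?_
      rw [Finset.sum_div]
      refine Finset.sum_congr rfl fun j _ => ?_
      have : w (i, j) = Ψ i j := rfl
      rw [this]; ring
    show δ / Real.sqrt (U * X) ≤ ∑ i, ∑ j, (υ₀ (i, j) / L) * Ψ i j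
    rw [heq, hinnerw]
    have hδυ : δ / Real.sqrt (U * X) ≤ ‖υ₀‖ / Real.sqrt (U * X) :=
      (div_le_div_iff_of_pos_right hUX).2 hυ₀δ
    refine le_trans hδυ ?_
    rw [div_le_div_iff₀ hUX hL0]
    nlinarith [norm_nonneg υ₀, hLle, hυ₀δ, hδ]
  · intro Υ hb1 hb2 hb3 hb4
    set vΥ : EuclideanSpace ℝ (Fin U × Fin U) := WithLp.toLp 2 (fun p : Fin U × Fin U => Υ p.1 p.2) with hvΥ
    have hvΥK : vΥ ∈ K' U := ⟨fun j => hb1 j, fun j => hb2 j, fun i j h => hb3 i j h⟩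
    have hvΥball : vΥ ∈ Metric.closedBall (0 : EuclideanSpace ℝ (Fin U × Fin U)) R := by
      rw [Metric.mem_closedBall, dist_zero_right]
      have h1 : ‖vΥ‖ ^ 2 ≤ (2 * (U : ℝ)) ^ 2 := by
        rw [norm_sq_eq, Fintype.sum_prod_type]
        exact hb4
      have h2 : ‖vΥ‖ ≤ 2 * U := by
        nlinarith [norm_nonneg vΥ, Nat.cast_nonneg (α := ℝ) U]
      exact le_trans h2 (le_max_left _ _)
    have hTmem : T A vΥ ∈ Cb := ⟨vΥ, ⟨hvΥK, hvΥball⟩, rfl⟩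
    have hle := hCle _ hTmem
    rw [real_inner_eq] at hle
    have heq : ∑ i, ∑ j, (υ₀ (i, j) / L) * (Υ * A) i j
        = (∑ p : Fin U × Fin X, υ₀ p * T A vΥ p) / L := by
      rw [Fintype.sum_prod_type, Finset.sum_div]
      refine Finset.sum_congr rfl fun i _ => ?_
      rw [Finset.sum_div]
      refine Finset.sum_congr rfl fun j _ => ?_
      rw [T_apply, Matrix.mul_apply]
      ring_nf
      rfl
    show ∑ i, ∑ j, (υ₀ (i, j) / L) * (Υ * A) i j ≤ 0
    rw [heq]
    exact div_nonpos_of_nonpos_of_nonneg hle hL0.le
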